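/- Fix m ∈ (2,6) and set λ₁(m) = (m²−6m)/8 + i·(m−2)√(8m−m²)/8. For every ρ > 0 such that the closed disk of center λ₁(m) and radius ρ is contained in {z∈ℂ : Re z < 0} ∖ (−∞,−1/4], there exists ε₀ > 0 such that for every ε ∈ (0,ε₀) the function λ ↦ D_ε(λ;m) has exactly one zero in the open disk {λ : |λ−λ₁(m)| < ρ}; in particular this zero has negative real part, and it converges to λ₁(m) as ε → 0⁺. -/

import Mathlib

set_option linter.unusedSectionVars false
set_option maxHeartbeats 1000000


open Complex Filter Topology

/-- Principal branch of the complex square root. -/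
noncomputable def csqrt (z : ℂ) : ℂ := z ^ (1/2 : ℂ)

/-- The dispersion relation D_ε(λ;m). -/
noncomputable def dispersion (ε m : ℝ) (l : ℂ) : ℂ :=
  -(1/4) * (csqrt (1 + 4 * ε * (m + ε * m ^ 2 + l)) + csqrt (1 + 4 * ε * l)) *
    ((ε : ℂ)⁻¹ * (csqrt (1 + 4 * ε * (m + ε * m ^ 2 + l)) - 1) + 1 + csqrt (1 + 4 * l)) *
    (1 - csqrt (1 + 4 * l) / (1 + m)) + m + ε * m ^ 2

/-- λ₁(m) = (m²−6m)/8 + i(m−2)√(8m−m²)/8. -/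
noncomputable def lambda1 (m : ℝ) : ℂ :=
  (((m ^ 2 - 6 * m) / 8 : ℝ) : ℂ) +
    Complex.I * (((m - 2) * Real.sqrt (8 * m - m ^ 2) / 8 : ℝ) : ℂ)

lemma csqrt_one : csqrt 1 = 1 := by simp [csqrt]

lemma sq_csqrt (z : ℂ) : csqrt z ^ 2 = z := by
  rcases eq_or_ne z 0 with rfl | hz
  · simp [csqrt, Complex.zero_cpow (by norm_num : (1/2:ℂ) ≠ 0)]
  · rw [csqrt, ← Complex.cpow_natCast, ← Complex.cpow_mul]
    · norm_num
    · have h1 := Complex.neg_pi_lt_arg z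
      simp only [Complex.mul_im, Complex.log_im]
      simp; nlinarith [Real.pi_pos]
    · have h2 := Complex.arg_le_pi z
      simp only [Complex.mul_im, Complex.log_im]
      simp; nlinarith [Real.pi_pos]

lemma re_csqrt_nonneg (z : ℂ) : 0 ≤ (csqrt z).re := by
  rcases eq_or_ne z 0 with rfl | hz
  · simp [csqrt, Complex.zero_cpow (by norm_num : (1/2:ℂ) ≠ 0)]
  · rw [csqrt, Complex.cpow_def_of_ne_zero hz]
    rw [Complex.exp_re]
    apply mul_nonneg (Real.exp_nonneg _)
    have him : (Complex.log z * (1/2 : ℂ)).im = Complex.arg z / 2 := by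
      simp [Complex.mul_im, Complex.log_im]; ring
    rw [him]
    apply Real.cos_nonneg_of_mem_Icc
    constructor
    · have := Complex.neg_pi_lt_arg z; linarith
    · have := Complex.arg_le_pi z; linarith

lemma csqrt_add_one_ne (z : ℂ) : csqrt z + 1 ≠ 0 := by
  intro h
  have h2 : (csqrt z).re + 1 = 0 := by
    have := congrArg Complex.re h; simpa [Complex.add_re] using this
  have := re_csqrt_nonneg z; linarith

lemma csqrt_of_sq {w : ℂ} (hw : 0 < w.re) : csqrt (w^2) = w := by
  have h := sq_csqrt (w^2)
  have : (csqrt (w^2) - w) * (csqrt (w^2) + w) = 0 := by ring_nf; linear_combination h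
  rcases mul_eq_zero.1 this with h1 | h1
  · linear_combination h1
  · exfalso
    have : (csqrt (w^2)).re = -w.re := by
      have := congrArg Complex.re h1; simp [Complex.add_re] at this; linarith
    have h2 := re_csqrt_nonneg (w^2); rw [this] at h2; linarith

lemma analyticAt_csqrt {z : ℂ} (h : z ∈ Complex.slitPlane) : AnalyticAt ℂ csqrt z :=
  analyticAt_id.cpow analyticAt_const h


noncomputable def sigma' (m : ℝ) : ℂ :=
  (((m - 2)/2 : ℝ) : ℂ) + ((Real.sqrt (8*m - m^2)/2 : ℝ) : ℂ) * Complex.I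

section facts
variable {m : ℝ} (hm2 : 2 < m) (hm6 : m < 6)
include hm2 hm6

lemma hq2 : Real.sqrt (8*m - m^2) ^ 2 = 8*m - m^2 :=
  Real.sq_sqrt (by nlinarith)

lemma hqpos : 0 < Real.sqrt (8*m - m^2) := Real.sqrt_pos.2 (by nlinarith)

lemma sigma_re : (sigma' m).re = (m-2)/2 := by simp [sigma']
lemma sigma_im : (sigma' m).im = Real.sqrt (8*m - m^2)/2 := by simp [sigma']

lemma lam_re : (lambda1 m).re = (m^2 - 6*m)/8 := by simp [lambda1, ← Complex.ofReal_pow]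
lemma lam_im : (lambda1 m).im = (m - 2) * Real.sqrt (8*m - m^2)/8 := by simp [lambda1, ← Complex.ofReal_pow]

lemma hqC : (Real.sqrt (8*m - m^2) : ℂ)^2 = 8*(m:ℂ) - (m:ℂ)^2 := by
  rw [← Complex.ofReal_pow, hq2 hm2 hm6]; push_cast; ring

lemma hsigma_sq : sigma' m ^ 2 = 1 + 4 * lambda1 m := by
  unfold sigma' lambda1
  push_cast
  linear_combination ((Real.sqrt (8*m - m^2) : ℂ)^2/4) * Complex.I_sq
    + (-1/4 : ℂ) * hqC hm2 hm6

lemma hquad : sigma' m ^ 2 - (m - 2) * sigma' m + (m + 1) = 0 := by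
  unfold sigma'
  push_cast
  linear_combination ((Real.sqrt (8*m - m^2) : ℂ)^2/4) * Complex.I_sq
    + (-1/4 : ℂ) * hqC hm2 hm6

lemma csqrt_lam : csqrt (1 + 4 * lambda1 m) = sigma' m := by
  rw [← hsigma_sq hm2 hm6]
  apply csqrt_of_sq
  rw [sigma_re hm2 hm6]; linarith

lemma hsigma_ne_zero : sigma' m ≠ 0 := by
  intro h
  have := congrArg Complex.re h
  rw [sigma_re hm2 hm6] at this
  simp at this; linarith

lemma hsigma_ne_one : sigma' m - 1 ≠ 0 := by
  intro h
  have := congrArg Complex.im h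
  simp [Complex.sub_im, sigma_im hm2 hm6] at this
  have := hqpos hm2 hm6; linarith

lemma h2sigma : 2 * sigma' m - (m - 2) ≠ 0 := by
  intro h
  have := congrArg Complex.im h
  simp [Complex.sub_im, Complex.mul_im, sigma_im hm2 hm6] at this
  have := hqpos hm2 hm6; linarith

end facts

noncomputable def Psi (m : ℝ) (p : ℂ × ℂ) : ℂ :=
  -(1/4) * (csqrt (1 + 4 * p.1 * (m + p.1 * m ^ 2 + p.2)) + csqrt (1 + 4 * p.1 * p.2)) *
    (4 * (m + p.1 * m ^ 2 + p.2) / (csqrt (1 + 4 * p.1 * (m + p.1 * m ^ 2 + p.2)) + 1) + 1 +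
      csqrt (1 + 4 * p.2)) *
    (1 - csqrt (1 + 4 * p.2) / (1 + m)) + m + p.1 * m ^ 2

lemma dispersion_eq_Psi {ε : ℝ} (hε : ε ≠ 0) (m : ℝ) (l : ℂ) :
    dispersion ε m l = Psi m ((ε : ℂ), l) := by
  have hεC : (ε : ℂ) ≠ 0 := Complex.ofReal_ne_zero.2 hε
  unfold dispersion Psi
  set A : ℂ := (m : ℂ) + ε * m ^ 2 + l with hA
  set s1 := csqrt (1 + 4 * ε * A) with hs1
  have h1 : (s1 - 1) * (s1 + 1) = 4 * ε * A := by
    have := sq_csqrt (1 + 4 * (ε:ℂ) * A); rw [← hs1] at this; linear_combination this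
  have h2 : s1 + 1 ≠ 0 := csqrt_add_one_ne _
  have key : (ε : ℂ)⁻¹ * (s1 - 1) = 4 * A / (s1 + 1) := by
    field_simp
    linear_combination h1
  rw [key]

lemma Psi_zero_eq (m : ℝ) (hm : (1 + (m:ℂ)) ≠ 0) (w : ℂ) :
    Psi m (0, w) =
      (csqrt (1 + 4*w) - 1) * (csqrt (1 + 4*w)^2 - (m - 2)*csqrt (1 + 4*w) + (m + 1)) /
        (4*(1 + m)) := by
  simp only [Psi]
  norm_num [csqrt_one]
  have hs := sq_csqrt (1 + 4*w)
  set s := csqrt (1 + 4*w) with hsdef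
  have hw : w = (s^2 - 1)/4 := by linear_combination (-1/4 : ℂ) * hs
  rw [hw]
  field_simp
  ring

lemma analyticAt_Psi {m : ℝ} (hm : (1 + (m:ℂ)) ≠ 0) {p : ℂ × ℂ}
    (h1 : 1 + 4 * p.1 * ((m:ℂ) + p.1 * (m:ℂ) ^ 2 + p.2) ∈ Complex.slitPlane)
    (h2 : 1 + 4 * p.1 * p.2 ∈ Complex.slitPlane)
    (h3 : 1 + 4 * p.2 ∈ Complex.slitPlane) :
    AnalyticAt ℂ (Psi m) p := by
  have a1 : AnalyticAt ℂ (fun q : ℂ × ℂ => (m:ℂ) + q.1 * (m:ℂ)^2 + q.2) p :=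
    (analyticAt_const.add (analyticAt_fst.mul analyticAt_const)).add analyticAt_snd
  have b1 : AnalyticAt ℂ (fun q : ℂ × ℂ => 1 + 4*q.1*((m:ℂ) + q.1*(m:ℂ)^2 + q.2)) p :=
    analyticAt_const.add ((analyticAt_const.mul analyticAt_fst).mul a1)
  have c1 : AnalyticAt ℂ (fun q : ℂ × ℂ => csqrt (1 + 4*q.1*((m:ℂ) + q.1*(m:ℂ)^2 + q.2))) p :=
    AnalyticAt.comp (g := csqrt)
      (f := fun q : ℂ × ℂ => 1 + 4*q.1*((m:ℂ) + q.1*(m:ℂ)^2 + q.2)) (analyticAt_csqrt h1) b1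
  have b2 : AnalyticAt ℂ (fun q : ℂ × ℂ => 1 + 4*q.1*q.2) p :=
    analyticAt_const.add ((analyticAt_const.mul analyticAt_fst).mul analyticAt_snd)
  have c2 : AnalyticAt ℂ (fun q : ℂ × ℂ => csqrt (1 + 4*q.1*q.2)) p :=
    AnalyticAt.comp (g := csqrt)
      (f := fun q : ℂ × ℂ => 1 + 4*q.1*q.2) (analyticAt_csqrt h2) b2
  have b3 : AnalyticAt ℂ (fun q : ℂ × ℂ => 1 + 4*q.2) p :=
    analyticAt_const.add (analyticAt_const.mul analyticAt_snd)
  have c3 : AnalyticAt ℂ (fun q : ℂ × ℂ => csqrt (1 + 4*q.2)) p :=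
    AnalyticAt.comp (g := csqrt)
      (f := fun q : ℂ × ℂ => 1 + 4*q.2) (analyticAt_csqrt h3) b3
  have d1 : AnalyticAt ℂ (fun q : ℂ × ℂ =>
      4*((m:ℂ) + q.1*(m:ℂ)^2 + q.2) / (csqrt (1 + 4*q.1*((m:ℂ) + q.1*(m:ℂ)^2 + q.2)) + 1)) p :=
    (analyticAt_const.mul a1).div (c1.add analyticAt_const) (csqrt_add_one_ne _)
  have X : AnalyticAt ℂ (fun q : ℂ × ℂ =>
      4*((m:ℂ) + q.1*(m:ℂ)^2 + q.2) / (csqrt (1 + 4*q.1*((m:ℂ) + q.1*(m:ℂ)^2 + q.2)) + 1) + 1 +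
        csqrt (1 + 4*q.2)) p := (d1.add analyticAt_const).add c3
  have Y : AnalyticAt ℂ (fun q : ℂ × ℂ => 1 - csqrt (1 + 4*q.2) / (1 + (m:ℂ))) p :=
    analyticAt_const.sub (c3.div analyticAt_const hm)
  exact ((((analyticAt_const.mul (c1.add c2)).mul X).mul Y).add analyticAt_const).add
    (analyticAt_fst.mul analyticAt_const)

noncomputable def dval (m : ℝ) : ℂ :=
  (sigma' m - 1) * (2 * sigma' m - ((m:ℂ) - 2)) * (2 * (sigma' m)⁻¹) / (4 * (1 + (m:ℂ)))

section deriv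
variable {m : ℝ} (hm2 : 2 < m) (hm6 : m < 6)
include hm2 hm6

lemma hm1C : (1 + (m:ℂ)) ≠ 0 := by
  have : ((1+m : ℝ) : ℂ) ≠ 0 := Complex.ofReal_ne_zero.2 (by linarith)
  simpa using this

lemma dval_ne : dval m ≠ 0 := by
  unfold dval
  apply div_ne_zero
  · exact mul_ne_zero (mul_ne_zero (hsigma_ne_one hm2 hm6) (h2sigma hm2 hm6))
      (mul_ne_zero two_ne_zero (inv_ne_zero (hsigma_ne_zero hm2 hm6)))
  · exact mul_ne_zero (by norm_num) (hm1C hm2 hm6)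

lemma hslit_lam : 1 + 4 * lambda1 m ∈ Complex.slitPlane := by
  rw [Complex.mem_slitPlane_iff]
  right
  have h1 : (1 + 4 * lambda1 m).im = 4 * ((m - 2) * Real.sqrt (8*m - m^2) / 8) := by
    simp [Complex.add_im, Complex.mul_im, lam_im hm2 hm6]
  rw [h1]
  have h2 : 0 < 4*((m-2) * Real.sqrt (8*m - m^2)/8) := by
    nlinarith [mul_pos (by linarith : (0:ℝ) < m - 2) (hqpos hm2 hm6)]
  exact ne_of_gt h2

lemma hasDerivAt_csqrt_affine :
    HasDerivAt (fun w : ℂ => csqrt (1 + 4 * w)) (2 * (sigma' m)⁻¹) (lambda1 m) := by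
  have hinner : HasDerivAt (fun w : ℂ => 1 + 4 * w) 4 (lambda1 m) := by
    simpa using ((hasDerivAt_id (lambda1 m)).const_mul (4:ℂ)).const_add 1
  have houter := (Complex.hasStrictDerivAt_cpow_const (c := (1/2 : ℂ))
    (hslit_lam hm2 hm6)).hasDerivAt
  have hcomp := houter.comp (lambda1 m) hinner
  have hval : (1/2 : ℂ) * (1 + 4 * lambda1 m) ^ ((1/2 : ℂ) - 1) * 4 = 2 * (sigma' m)⁻¹ := by
    rw [show ((1/2 : ℂ) - 1) = -(1/2) by norm_num, Complex.cpow_neg]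
    have hcl := csqrt_lam hm2 hm6
    unfold csqrt at hcl
    rw [hcl]; ring
  rw [← hval]
  exact hcomp

lemma hasDerivAt_Phi0 :
    HasDerivAt (fun w : ℂ => Psi m (0, w)) (dval m) (lambda1 m) := by
  have hm1 := hm1C hm2 hm6
  have hfun : (fun w : ℂ => Psi m (0, w)) = fun w =>
      (csqrt (1 + 4*w) - 1) * (csqrt (1 + 4*w)^2 - ((m:ℂ) - 2)*csqrt (1 + 4*w) + ((m:ℂ) + 1)) /
        (4*(1 + (m:ℂ))) := funext fun w => Psi_zero_eq m hm1 w
  rw [hfun]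
  have hS := hasDerivAt_csqrt_affine hm2 hm6
  have hQ : HasDerivAt (fun w : ℂ =>
      csqrt (1 + 4*w)^2 - ((m:ℂ) - 2)*csqrt (1 + 4*w) + ((m:ℂ) + 1))
      (2 * csqrt (1 + 4*lambda1 m) ^ 1 * (2 * (sigma' m)⁻¹) -
        ((m:ℂ) - 2) * (2 * (sigma' m)⁻¹)) (lambda1 m) :=
    ((hS.pow 2).sub (hS.const_mul _)).add_const _
  have hprod := ((hS.sub_const 1).mul hQ).div_const (4*(1 + (m:ℂ)))
  have hcl := csqrt_lam hm2 hm6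
  rw [hcl] at hprod
  refine hprod.congr_deriv (Eq.symm ?_)
  unfold dval
  rw [div_eq_div_iff (by exact mul_ne_zero (by norm_num) hm1) (by exact mul_ne_zero (by norm_num) hm1)]
  linear_combination (-(2*(sigma' m)⁻¹) * (4*(1+(m:ℂ)))) * hquad hm2 hm6

end deriv

noncomputable def tau' (m : ℝ) : ℂ :=
  (((m - 2)/2 : ℝ) : ℂ) - ((Real.sqrt (8*m - m^2)/2 : ℝ) : ℂ) * Complex.I

section cls
variable {m : ℝ} (hm2 : 2 < m) (hm6 : m < 6)
include hm2 hm6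

lemma hfact (s : ℂ) :
    s^2 - ((m:ℂ) - 2)*s + ((m:ℂ) + 1) = (s - sigma' m) * (s - tau' m) := by
  unfold sigma' tau'
  push_cast
  linear_combination ((Real.sqrt (8*m - m^2) : ℂ)^2/4) * Complex.I_sq
    + (-1/4 : ℂ) * hqC hm2 hm6

lemma tau_re : (tau' m).re = (m-2)/2 := by simp [tau']
lemma tau_im : (tau' m).im = -(Real.sqrt (8*m - m^2)/2) := by simp [tau']

lemma conj_sigma : (starRingEnd ℂ) (sigma' m) = tau' m := by
  apply Complex.ext
  · rw [Complex.conj_re, sigma_re hm2 hm6, tau_re hm2 hm6]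
  · rw [Complex.conj_im, sigma_im hm2 hm6, tau_im hm2 hm6]

lemma htau_sq : tau' m ^ 2 = 1 + 4 * (starRingEnd ℂ) (lambda1 m) := by
  rw [← conj_sigma hm2 hm6, ← map_pow, hsigma_sq hm2 hm6]
  rw [map_add, map_mul, map_one, Complex.conj_ofNat]

lemma hrho_lt {ρ : ℝ} (hρ : 0 < ρ)
    (hsub : Metric.closedBall (lambda1 m) ρ ⊆
      {z : ℂ | z.re < 0} \ {z : ℂ | z.im = 0 ∧ z.re ≤ -(1/4)}) :
    ρ < (m - 2) * Real.sqrt (8*m - m^2) / 4 := by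
  set q := Real.sqrt (8*m - m^2) with hqdef
  have hqp := hqpos hm2 hm6
  have hq2' := hq2 hm2 hm6
  set b : ℝ := (m - 2) * q / 8 with hbdef
  have hbpos : 0 < b := by
    rw [hbdef]; nlinarith [mul_pos (by linarith : (0:ℝ) < m - 2) hqp]
  have hgoal : (m - 2) * q / 4 = 2 * b := by rw [hbdef]; ring
  rw [hgoal]
  by_cases hca : (m^2 - 6*m)/8 ≤ -(1/4)
  · -- point on the cut at distance b
    have hcnot : (((m^2 - 6*m)/8 : ℝ) : ℂ) ∉ Metric.closedBall (lambda1 m) ρ := by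
      intro hmem
      have h2 := (hsub hmem).2
      exact h2 ⟨Complex.ofReal_im _, by rw [Complex.ofReal_re]; exact hca⟩
    have hdist : dist (((m^2 - 6*m)/8 : ℝ) : ℂ) (lambda1 m) = b := by
      rw [Complex.dist_eq]
      have : (((m^2 - 6*m)/8 : ℝ) : ℂ) - lambda1 m = -(Complex.I * ((b:ℝ) : ℂ)) := by
        rw [lambda1, hbdef]; push_cast; ring
      rw [this]
      simp [Complex.norm_real, abs_of_pos hbpos]
    have : ρ < b := by
      by_contra hle
      push_neg at hle
      exact hcnot (by rw [Metric.mem_closedBall, hdist]; linarith)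
    linarith
  · push_neg at hca
    have haneg : (m^2 - 6*m)/8 < 0 := by nlinarith
    have hdnot : Complex.I * ((b:ℝ) : ℂ) ∉ Metric.closedBall (lambda1 m) ρ := by
      intro hmem
      have h1 := (hsub hmem).1
      simp only [Set.mem_setOf_eq] at h1
      have : (Complex.I * ((b:ℝ) : ℂ)).re = 0 := by simp
      linarith [this ▸ h1]
    have hdist : dist (Complex.I * ((b:ℝ) : ℂ)) (lambda1 m) = -((m^2 - 6*m)/8) := by
      rw [Complex.dist_eq]
      have : Complex.I * ((b:ℝ) : ℂ) - lambda1 m = -(((m^2 - 6*m)/8 : ℝ) : ℂ) := by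
        rw [lambda1, hbdef]; push_cast; ring
      simp only [this, norm_neg, Complex.norm_real, Real.norm_eq_abs]
      exact abs_of_neg haneg
    have hρa : ρ < -((m^2 - 6*m)/8) := by
      by_contra hle
      push_neg at hle
      exact hdnot (by rw [Metric.mem_closedBall, hdist]; linarith)
    have hsq : (m - 2)^2 * (8*m - m^2) > 1 := by nlinarith
    have h1 : 1 < (m - 2) * q := by
      nlinarith [mul_pos (by linarith : (0:ℝ) < m - 2) hqp, hq2',
        sq_nonneg ((m - 2) * q - 1), sq_nonneg ((m - 2) * q + 1)]
    have : 2 * b = (m - 2) * q / 4 := by rw [hbdef]; ring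
    linarith

lemma Psi_zero_classify {ρ : ℝ} (hρ : 0 < ρ)
    (hsub : Metric.closedBall (lambda1 m) ρ ⊆
      {z : ℂ | z.re < 0} \ {z : ℂ | z.im = 0 ∧ z.re ≤ -(1/4)})
    {w : ℂ} (hw : w ∈ Metric.closedBall (lambda1 m) ρ) (h0 : Psi m (0, w) = 0) :
    w = lambda1 m := by
  have hm1 := hm1C hm2 hm6
  rw [Psi_zero_eq m hm1 w] at h0
  have h4 : (4 * (1 + (m:ℂ))) ≠ 0 := mul_ne_zero (by norm_num) hm1
  rw [div_eq_zero_iff] at h0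
  rcases h0 with h0 | h0
  swap
  · exact absurd h0 h4
  set s := csqrt (1 + 4*w) with hsdef
  have hs2 : s^2 = 1 + 4*w := sq_csqrt _
  rw [hfact hm2 hm6 s] at h0
  have hwre : w.re < 0 := (hsub hw).1
  rcases mul_eq_zero.1 h0 with h1 | h1
  · -- s = 1 → w = 0, contradiction with re < 0
    exfalso
    have hs1 : s = 1 := by linear_combination h1
    have hw0 : w = 0 := by
      have : (1:ℂ) + 4*w = 1 := by rw [← hs2, hs1]; ring
      linear_combination this / 4
    rw [hw0] at hwre; simp at hwre
  rcases mul_eq_zero.1 h1 with h1 | h1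
  · -- s = σ → w = λ₁
    have hs1 : s = sigma' m := by linear_combination h1
    have : (1:ℂ) + 4*w = 1 + 4*lambda1 m := by
      rw [← hs2, hs1, hsigma_sq hm2 hm6]
    linear_combination this / 4
  · -- s = τ → w = conj λ₁, contradiction with distance
    exfalso
    have hs1 : s = tau' m := by linear_combination h1
    have hwc : w = (starRingEnd ℂ) (lambda1 m) := by
      have : (1:ℂ) + 4*w = 1 + 4*(starRingEnd ℂ) (lambda1 m) := by
        rw [← hs2, hs1, htau_sq hm2 hm6]
      linear_combination this / 4
    have hdist := Metric.mem_closedBall.1 hw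
    have him : (w - lambda1 m).im = -(2 * ((m - 2) * Real.sqrt (8*m - m^2)/8)) := by
      rw [hwc]
      simp [Complex.sub_im, Complex.conj_im, lam_im hm2 hm6]
      ring
    have habs : |(w - lambda1 m).im| ≤ dist w (lambda1 m) := by
      rw [Complex.dist_eq]
      exact Complex.abs_im_le_norm _
    have hb := hrho_lt hm2 hm6 hρ hsub
    have hbpos : 0 < (m - 2) * Real.sqrt (8*m - m^2) / 8 :=
      by nlinarith [mul_pos (by linarith : (0:ℝ) < m - 2) (hqpos hm2 hm6)]
    rw [him] at habs
    rw [abs_neg, abs_of_pos (by linarith)] at habs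
    have : (m-2) * Real.sqrt (8*m-m^2)/4 ≤ ρ := by
      calc (m-2) * Real.sqrt (8*m-m^2)/4 = 2 * ((m - 2) * Real.sqrt (8*m - m^2)/8) := by ring
      _ ≤ dist w (lambda1 m) := habs
      _ ≤ ρ := hdist
    linarith

lemma Psi_lam_zero : Psi m (0, lambda1 m) = 0 := by
  rw [Psi_zero_eq m (hm1C hm2 hm6) (lambda1 m), csqrt_lam hm2 hm6]
  rw [hquad hm2 hm6]
  simp

end cls

/-- for fixed m ∈ (2,6) and any ρ > 0 such that the closed disk
centered at λ₁(m) of radius ρ is contained in the open left halfplane minus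
the halfline (−∞,−1/4], there exists ε₀ > 0 such that for every ε ∈ (0,ε₀)
the function D_ε(·;m) has exactly one zero in the open disk of radius ρ around
λ₁(m); this zero has negative real part and converges to λ₁(m) as ε → 0⁺. -/
theorem hurwitz_root_near_lambda1 (m : ℝ) (hm2 : 2 < m) (hm6 : m < 6) :
    ∀ ρ > (0:ℝ),
      Metric.closedBall (lambda1 m) ρ ⊆
        {z : ℂ | z.re < 0} \ {z : ℂ | z.im = 0 ∧ z.re ≤ -(1/4)} →
      ∃ ε₀ > (0:ℝ), ∃ zr : ℝ → ℂ,
        (∀ ε ∈ Set.Ioo (0:ℝ) ε₀,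
          zr ε ∈ Metric.ball (lambda1 m) ρ ∧
          dispersion ε m (zr ε) = 0 ∧
          (∀ w ∈ Metric.ball (lambda1 m) ρ, dispersion ε m w = 0 → w = zr ε) ∧
          (zr ε).re < 0) ∧
        Tendsto zr (𝓝[>] (0:ℝ)) (𝓝 (lambda1 m)) := by
  intro ρ hρ hsub
  have hm1 : (1 + (m:ℂ)) ≠ 0 := hm1C hm2 hm6
  -- slit plane membership for points of the closed ball
  have hslit3 : ∀ w : ℂ, w ∈ Metric.closedBall (lambda1 m) ρ →
      1 + 4 * w ∈ Complex.slitPlane := by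
    intro w hw
    rcases hsub hw with ⟨hre, hcut⟩
    rw [Complex.mem_slitPlane_iff]
    by_cases him : w.im = 0
    · left
      have hc : ¬ (w.re ≤ -(1/4)) := fun h => hcut ⟨him, h⟩
      push_neg at hc
      have he : (1 + 4*w).re = 1 + 4*w.re := by simp
      rw [he]; linarith
    · right
      have he : (1 + 4*w).im = 4 * w.im := by simp
      rw [he]; simpa using him
  have hlamball : lambda1 m ∈ Metric.closedBall (lambda1 m) ρ :=
    Metric.mem_closedBall_self (le_of_lt hρ)
  -- analyticity at (0, λ₁)
  have hA : AnalyticAt ℂ (Psi m) (((0:ℂ), lambda1 m) : ℂ × ℂ) := by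
    apply analyticAt_Psi hm1
    · show 1 + 4*(0:ℂ)*((m:ℂ) + (0:ℂ)*(m:ℂ)^2 + lambda1 m) ∈ Complex.slitPlane
      norm_num [Complex.mem_slitPlane_iff]
    · show 1 + 4*(0:ℂ)*(lambda1 m) ∈ Complex.slitPlane
      norm_num [Complex.mem_slitPlane_iff]
    · exact hslit_lam hm2 hm6
  have hstrict : HasStrictFDerivAt (Psi m)
      (fderiv ℂ (Psi m) (((0:ℂ), lambda1 m) : ℂ × ℂ)) (((0:ℂ), lambda1 m) : ℂ × ℂ) :=
    (hA.contDiffAt (n := 1)).hasStrictFDerivAt one_ne_zero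
  set L := fderiv ℂ (Psi m) (((0:ℂ), lambda1 m) : ℂ × ℂ) with hLdef
  -- the partial derivative in λ is dval m
  have hb : L (((0:ℂ),(1:ℂ)) : ℂ × ℂ) = dval m := by
    have hcurve : HasDerivAt (fun t : ℂ => (((0:ℂ), t) : ℂ × ℂ))
        ((((0:ℂ),(1:ℂ))) : ℂ × ℂ) (lambda1 m) :=
      (hasDerivAt_const _ (0:ℂ)).prodMk (hasDerivAt_id _)
    have h1 : HasDerivAt (fun t : ℂ => Psi m (((0:ℂ), t) : ℂ × ℂ))
        (L (((0:ℂ),(1:ℂ)) : ℂ × ℂ)) (lambda1 m) :=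
      hstrict.hasFDerivAt.comp_hasDerivAt _ hcurve
    exact h1.unique (hasDerivAt_Phi0 hm2 hm6)
  have hdne : dval m ≠ 0 := dval_ne hm2 hm6
  have hkey : ∀ x y : ℂ, L ((x, y) : ℂ × ℂ) = L ((x, 0) : ℂ × ℂ) + y * dval m := by
    intro x y
    have hxy : ((x,y) : ℂ × ℂ) = ((x,0) : ℂ × ℂ) + ((0,y) : ℂ × ℂ) := by simp
    have h0y : (((0:ℂ),y) : ℂ × ℂ) = y • (((0:ℂ),(1:ℂ)) : ℂ × ℂ) := by simp
    rw [hxy, map_add, h0y, map_smul, hb, smul_eq_mul]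
  set Mv : ℂ × ℂ →L[ℂ] ℂ :=
    (dval m)⁻¹ • (ContinuousLinearMap.snd ℂ ℂ ℂ -
      L.comp ((ContinuousLinearMap.inl ℂ ℂ ℂ).comp (ContinuousLinearMap.fst ℂ ℂ ℂ))) with hMv
  set f₀ : ℂ × ℂ →L[ℂ] ℂ × ℂ := (ContinuousLinearMap.fst ℂ ℂ ℂ).prod L with hf₀
  set g₀ : ℂ × ℂ →L[ℂ] ℂ × ℂ := (ContinuousLinearMap.fst ℂ ℂ ℂ).prod Mv with hg₀
  have hleft : Function.LeftInverse g₀ f₀ := by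
    intro p
    have h2 : Mv (f₀ p) = p.2 := by
      simp only [hMv, hf₀, ContinuousLinearMap.smul_apply, ContinuousLinearMap.sub_apply,
        ContinuousLinearMap.comp_apply, ContinuousLinearMap.prod_apply,
        ContinuousLinearMap.coe_fst', ContinuousLinearMap.coe_snd',
        ContinuousLinearMap.inl_apply, smul_eq_mul]
      rw [show L p = L ((p.1, p.2) : ℂ × ℂ) by rw [Prod.mk.eta], hkey p.1 p.2]
      field_simp
      ring
    have h1 : (f₀ p).1 = p.1 := by simp [hf₀]
    calc g₀ (f₀ p) = ((f₀ p).1, Mv (f₀ p)) := by simp [hg₀]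
    _ = (p.1, p.2) := by rw [h1, h2]
    _ = p := Prod.mk.eta
  have hright : Function.RightInverse g₀ f₀ := by
    intro q
    have h2 : L ((q.1, Mv q) : ℂ × ℂ) = q.2 := by
      rw [hkey q.1 (Mv q)]
      simp only [hMv, ContinuousLinearMap.smul_apply, ContinuousLinearMap.sub_apply,
        ContinuousLinearMap.comp_apply, ContinuousLinearMap.inl_apply,
        ContinuousLinearMap.coe_fst', ContinuousLinearMap.coe_snd', smul_eq_mul]
      field_simp
      ring
    calc f₀ (g₀ q) = ((g₀ q).1, L (g₀ q)) := by simp [hf₀]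
    _ = (q.1, L ((q.1, Mv q) : ℂ × ℂ)) := by simp [hg₀]
    _ = (q.1, q.2) := by rw [h2]
    _ = q := Prod.mk.eta
  set e := ContinuousLinearEquiv.equivOfInverse f₀ g₀ hleft hright with he
  have hFs : HasStrictFDerivAt (fun p : ℂ × ℂ => ((p.1, Psi m p) : ℂ × ℂ))
      (e : ℂ × ℂ →L[ℂ] ℂ × ℂ) (((0:ℂ), lambda1 m) : ℂ × ℂ) := by
    have hco : (e : ℂ × ℂ →L[ℂ] ℂ × ℂ) = f₀ := rfl
    rw [hco, hf₀]
    exact hasStrictFDerivAt_fst.prodMk hstrict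
  set Fm : ℂ × ℂ → ℂ × ℂ := fun p : ℂ × ℂ => ((p.1, Psi m p) : ℂ × ℂ) with hFm
  set inv : ℂ × ℂ → ℂ × ℂ :=
    HasStrictFDerivAt.localInverse Fm e (((0:ℂ), lambda1 m) : ℂ × ℂ) hFs with hinvdef
  have Fa : Fm (((0:ℂ), lambda1 m) : ℂ × ℂ) = (((0:ℂ),(0:ℂ)) : ℂ × ℂ) := by
    simp [hFm, Psi_lam_zero hm2 hm6]
  have inv00 : inv (((0:ℂ),(0:ℂ)) : ℂ × ℂ) = (((0:ℂ), lambda1 m) : ℂ × ℂ) := by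
    rw [← Fa]
    exact hFs.localInverse_apply_image
  -- right inverse ball
  obtain ⟨δ₁, hδ₁pos, hδ₁⟩ := Metric.eventually_nhds_iff.1 (Fa ▸ hFs.eventually_right_inverse)
  -- left inverse ball
  obtain ⟨δ₂, hδ₂pos, hδ₂⟩ := Metric.eventually_nhds_iff.1 hFs.eventually_left_inverse
  set r := min δ₂ ρ with hr
  have hrpos : 0 < r := lt_min hδ₂pos hρ
  have hc : ContinuousAt inv (((0:ℂ),(0:ℂ)) : ℂ × ℂ) := by
    have := hFs.localInverse_continuousAt
    rwa [Fa] at this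
  obtain ⟨δ₃, hδ₃pos, hδ₃⟩ := Metric.continuousAt_iff.1 hc r hrpos
  -- tube lemma: no zeros in the annulus for small ε
  set K := Metric.closedBall (lambda1 m) ρ \ Metric.ball (lambda1 m) r with hK
  have hKcomp : IsCompact K := (isCompact_closedBall _ _).diff Metric.isOpen_ball
  set V : Set (ℂ × ℂ) :=
    ((fun p : ℂ × ℂ => 1 + 4*p.1*((m:ℂ) + p.1*(m:ℂ)^2 + p.2)) ⁻¹' Complex.slitPlane) ∩
    (((fun p : ℂ × ℂ => 1 + 4*p.1*p.2) ⁻¹' Complex.slitPlane) ∩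
     ((fun p : ℂ × ℂ => 1 + 4*p.2) ⁻¹' Complex.slitPlane)) with hV
  have hVopen : IsOpen V :=
    (Complex.isOpen_slitPlane.preimage (by fun_prop)).inter
      ((Complex.isOpen_slitPlane.preimage (by fun_prop)).inter
        (Complex.isOpen_slitPlane.preimage (by fun_prop)))
  have hPc : ContinuousOn (Psi m) V := fun p hp =>
    (analyticAt_Psi hm1 hp.1 hp.2.1 hp.2.2).continuousAt.continuousWithinAt
  have hOopen : IsOpen (V ∩ Psi m ⁻¹' ({(0:ℂ)}ᶜ)) :=
    hPc.isOpen_inter_preimage hVopen isOpen_compl_singleton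
  set j : ℝ × ℂ → ℂ × ℂ := fun q => ((q.1 : ℂ), q.2) with hj
  have hjc : Continuous j :=
    (Complex.continuous_ofReal.comp continuous_fst).prodMk continuous_snd
  have hno : IsOpen (j ⁻¹' (V ∩ Psi m ⁻¹' ({(0:ℂ)}ᶜ))) := hOopen.preimage hjc
  have hsub' : ({(0:ℝ)} : Set ℝ) ×ˢ K ⊆ j ⁻¹' (V ∩ Psi m ⁻¹' ({(0:ℂ)}ᶜ)) := by
    rintro ⟨t, w⟩ ⟨ht, hwK⟩
    simp only [Set.mem_singleton_iff] at ht
    subst ht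
    have hwcb : w ∈ Metric.closedBall (lambda1 m) ρ := hwK.1
    constructor
    · refine ⟨?_, ?_, ?_⟩
      · show 1 + 4*((0:ℝ):ℂ)*((m:ℂ) + ((0:ℝ):ℂ)*(m:ℂ)^2 + w) ∈ Complex.slitPlane
        norm_num [Complex.mem_slitPlane_iff]
      · show 1 + 4*((0:ℝ):ℂ)*w ∈ Complex.slitPlane
        norm_num [Complex.mem_slitPlane_iff]
      · exact hslit3 w hwcb
    · show Psi m (((0:ℝ):ℂ), w) ∉ ({(0:ℂ)} : Set ℂ)
      simp only [Set.mem_singleton_iff]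
      intro h0
      have hw0 : w = lambda1 m := by
        apply Psi_zero_classify hm2 hm6 hρ hsub hwcb
        simpa using h0
      exact hwK.2 (hw0 ▸ Metric.mem_ball_self hrpos)
  obtain ⟨u, v, huo, hvo, hu0, hKv, huv⟩ :=
    generalized_tube_lemma isCompact_singleton hKcomp hno hsub'
  obtain ⟨δ₄, hδ₄pos, hδ₄⟩ := Metric.isOpen_iff.1 huo 0 (hu0 rfl)
  -- the final data
  refine ⟨min (min δ₁ δ₂) (min δ₃ δ₄), lt_min (lt_min hδ₁pos hδ₂pos) (lt_min hδ₃pos hδ₄pos),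
    fun t => (inv (((t:ℝ):ℂ), (0:ℂ))).2, ?_, ?_⟩
  · rintro ε ⟨hε1, hε2⟩
    have hεδ₁ : ε < δ₁ := lt_of_lt_of_le hε2 (le_trans (min_le_left _ _) (min_le_left _ _))
    have hεδ₂ : ε < δ₂ := lt_of_lt_of_le hε2 (le_trans (min_le_left _ _) (min_le_right _ _))
    have hεδ₃ : ε < δ₃ := lt_of_lt_of_le hε2 (le_trans (min_le_right _ _) (min_le_left _ _))
    have hεδ₄ : ε < δ₄ := lt_of_lt_of_le hε2 (le_trans (min_le_right _ _) (min_le_right _ _))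
    have hd0 : dist ((((ε:ℝ):ℂ), (0:ℂ)) : ℂ × ℂ) (((0:ℂ),(0:ℂ)) : ℂ × ℂ) = ε := by
      rw [Prod.dist_eq]
      simp only [Complex.dist_eq, sub_zero, Complex.norm_real, Real.norm_eq_abs, dist_self]
      rw [abs_of_pos hε1]
      exact max_eq_left (le_of_lt hε1)
    -- Psi vanishes at the constructed point
    have hFinv := hδ₁ (show dist ((((ε:ℝ):ℂ), (0:ℂ)) : ℂ × ℂ) (((0:ℂ),(0:ℂ)) : ℂ × ℂ) < δ₁ by
      rw [hd0]; exact hεδ₁)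
    simp only [hFm] at hFinv
    have h1 : (inv (((ε:ℝ):ℂ), (0:ℂ))).1 = ((ε:ℝ):ℂ) := congrArg Prod.fst hFinv
    have h2 : Psi m (inv (((ε:ℝ):ℂ), (0:ℂ))) = 0 := congrArg Prod.snd hFinv
    have hpair : inv (((ε:ℝ):ℂ), (0:ℂ)) =
        ((((ε:ℝ):ℂ)), (inv (((ε:ℝ):ℂ), (0:ℂ))).2) := by
      exact Prod.ext_iff.2 ⟨h1, rfl⟩
    have hPz : Psi m ((((ε:ℝ):ℂ)), (inv (((ε:ℝ):ℂ), (0:ℂ))).2) = 0 := by rw [← hpair]; exact h2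
    -- location of the constructed point
    have hd3 := hδ₃ (show dist ((((ε:ℝ):ℂ), (0:ℂ)) : ℂ × ℂ) (((0:ℂ),(0:ℂ)) : ℂ × ℂ) < δ₃ by
      rw [hd0]; exact hεδ₃)
    rw [inv00] at hd3
    have hzr : dist (inv (((ε:ℝ):ℂ), (0:ℂ))).2 (lambda1 m) < r := by
      have hle : dist (inv (((ε:ℝ):ℂ), (0:ℂ))).2 (lambda1 m) ≤
          dist (inv (((ε:ℝ):ℂ), (0:ℂ))) (((0:ℂ), lambda1 m) : ℂ × ℂ) := by
        rw [Prod.dist_eq]; exact le_max_right _ _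
      exact lt_of_le_of_lt hle hd3
    have hzball : (inv (((ε:ℝ):ℂ), (0:ℂ))).2 ∈ Metric.ball (lambda1 m) ρ :=
      Metric.mem_ball.2 (lt_of_lt_of_le hzr (min_le_right _ _))
    refine ⟨hzball, ?_, ?_, ?_⟩
    · rw [dispersion_eq_Psi (ne_of_gt hε1)]
      exact hPz
    · -- uniqueness
      intro w hwball hwzero
      have hPw : Psi m (((ε:ℝ):ℂ), w) = 0 := by
        rw [← dispersion_eq_Psi (ne_of_gt hε1)]; exact hwzero
      have hwcb : w ∈ Metric.closedBall (lambda1 m) ρ := Metric.ball_subset_closedBall hwball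
      have hwr : w ∈ Metric.ball (lambda1 m) r := by
        by_contra hnot
        have hwK : w ∈ K := ⟨hwcb, hnot⟩
        have hmem : ((ε, w) : ℝ × ℂ) ∈ u ×ˢ v :=
          ⟨hδ₄ (by rw [Metric.mem_ball, Real.dist_eq, sub_zero, abs_of_pos hε1]; exact hεδ₄),
            hKv hwK⟩
        have := huv hmem
        exact (this.2 : Psi m (((ε:ℝ):ℂ), w) ∉ ({(0:ℂ)} : Set ℂ)) (by simpa using hPw)
      have hdw : dist ((((ε:ℝ):ℂ), w) : ℂ × ℂ) (((0:ℂ), lambda1 m) : ℂ × ℂ) < δ₂ := by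
        rw [Prod.dist_eq]
        apply max_lt
        · simpa [Complex.dist_eq, Complex.norm_real, abs_of_pos hε1] using hεδ₂
        · exact lt_of_lt_of_le (Metric.mem_ball.1 hwr) (min_le_left _ _)
      have hlinv := hδ₂ hdw
      have hFw : Fm ((((ε:ℝ):ℂ), w) : ℂ × ℂ) = ((((ε:ℝ):ℂ)), (0:ℂ)) := by
        simp [hFm, hPw]
      rw [hFw] at hlinv
      have := congrArg Prod.snd hlinv
      simpa using this.symm
    · exact (hsub (Metric.ball_subset_closedBall hzball)).1
  · -- convergence
    have h1 : Tendsto (fun t : ℝ => (((t:ℂ), (0:ℂ)) : ℂ × ℂ)) (𝓝 0)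
        (𝓝 (((0:ℂ),(0:ℂ)) : ℂ × ℂ)) := by
      have := (Complex.continuous_ofReal.tendsto 0).prodMk_nhds
        (tendsto_const_nhds : Tendsto (fun _ : ℝ => (0:ℂ)) (𝓝 (0:ℝ)) (𝓝 (0:ℂ)))
      simpa using this
    have h2 : Tendsto inv (𝓝 (((0:ℂ),(0:ℂ)) : ℂ × ℂ)) (𝓝 (((0:ℂ), lambda1 m) : ℂ × ℂ)) := by
      have h := hc
      rw [ContinuousAt, inv00] at h
      exact h
    have h3 : Tendsto (fun t : ℝ => (inv (((t:ℝ):ℂ), (0:ℂ))).2) (𝓝 0) (𝓝 (lambda1 m)) :=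
      (continuous_snd.tendsto (((0:ℂ), lambda1 m) : ℂ × ℂ)).comp (h2.comp h1)
    exact h3.mono_left nhdsWithin_le_nhds
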